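/- Let A be an integral domain satisfying (P2), let g ∈ A be nonzero, and let F ∈ A[Y] be a nonconstant polynomial with F(0) ≠ 0. Then there exists b ∈ A such that the image of F(b) in the localization A_g is not a unit of A_g. -/
import Mathlib

open Polynomial

lemma unit_aux {A : Type*} [CommRing A] [IsDomain A] (g : A) (hg : g ≠ 0)
    (x t : A) (hx : x = 1 + g * t)
    (h : IsUnit (algebraMap A (Localization.Away g) x)) : IsUnit x := by
  obtain ⟨u, hu⟩ := h
  have hz : algebraMap A (Localization.Away g) x * (↑u⁻¹ : Localization.Away g) = 1 := by
    rw [← hu]; exact u.mul_inv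
  obtain ⟨⟨p, s⟩, hps⟩ := IsLocalization.surj (Submonoid.powers g)
    ((↑u⁻¹ : Localization.Away g))
  obtain ⟨n, hn⟩ := s.prop
  have hinj : Function.Injective (algebraMap A (Localization.Away g)) :=
    IsLocalization.injective _ (powers_le_nonZeroDivisors_of_noZeroDivisors hg)
  have key : x * p = g ^ n := by
    apply hinj
    rw [map_mul, map_pow]
    calc algebraMap A (Localization.Away g) x * algebraMap A (Localization.Away g) p
        = algebraMap A (Localization.Away g) x *
            ((↑u⁻¹ : Localization.Away g) * algebraMap A (Localization.Away g) (s : A)) := by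
          rw [hps]
      _ = (algebraMap A (Localization.Away g) x * (↑u⁻¹ : Localization.Away g)) *
            algebraMap A (Localization.Away g) (s : A) := by ring
      _ = algebraMap A (Localization.Away g) (s : A) := by rw [hz, one_mul]
      _ = (algebraMap A (Localization.Away g) g) ^ n := by
          have hn' : g ^ n = (s : A) := hn
          rw [← map_pow, hn']
  have hdvd1 : x ∣ (x - 1) ^ n := by
    have hgt : g * t = x - 1 := by rw [hx]; ring
    refine ⟨p * t ^ n, ?_⟩
    rw [← hgt, mul_pow, ← key]; ring
  have hdvd2 : x ∣ (x - 1) ^ n - (-1 : A) ^ n := by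
    have := sub_dvd_pow_sub_pow (x - 1) (-1 : A) n
    simpa using this
  have hdvd3 : x ∣ (-1 : A) ^ n := by
    have h3 := dvd_sub hdvd1 hdvd2
    simpa [sub_sub_cancel] using h3
  exact isUnit_of_dvd_unit hdvd3 ((isUnit_one.neg).pow n)

theorem stmt_9 {A : Type*} [CommRing A] [IsDomain A]
    (hP2 : ∀ G : Polynomial A, 0 < G.natDegree → ∃ c : A, ¬ IsUnit (G.eval c))
    (g : A) (hg : g ≠ 0)
    (F : Polynomial A) (hF : 0 < F.natDegree) (hF0 : F.eval 0 ≠ 0) :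
    ∃ b : A, ¬ IsUnit (algebraMap A (Localization.Away g) (F.eval b)) := by
  classical
  set a := F.coeff 0 with ha_def
  have ha0 : a ≠ 0 := by rwa [ha_def, Polynomial.coeff_zero_eq_eval_zero]
  by_cases ha : IsUnit (algebraMap A (Localization.Away g) a)
  · set n := F.natDegree with hn_def
    obtain ⟨m, hm⟩ : ∃ m, n = m + 1 := ⟨n - 1, (Nat.succ_pred_eq_of_pos hF).symm⟩
    set Q : Polynomial A :=
      ∑ i ∈ Finset.range n, C (F.coeff (i+1) * a^i * g^i) * X^i with hQ
    set H : Polynomial A := C 1 + C g * (X * Q) with hH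
    have hQm : Q.coeff m = F.coeff n * a^m * g^m := by
      rw [hQ, Polynomial.finset_sum_coeff]
      rw [Finset.sum_eq_single m]
      · rw [Polynomial.coeff_C_mul, Polynomial.coeff_X_pow, if_pos rfl, mul_one, hm]
      · intro i _ hne
        rw [Polynomial.coeff_C_mul, Polynomial.coeff_X_pow, if_neg (Ne.symm hne), mul_zero]
      · intro h; exact absurd (Finset.mem_range.mpr (by omega)) h
    have hFn : F.coeff n ≠ 0 := by
      have : F ≠ 0 := by
        intro h
        rw [hn_def, h] at hF
        simp at hF
      exact Polynomial.leadingCoeff_ne_zero.mpr this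
    have hHn : H.coeff n ≠ 0 := by
      have hcn : H.coeff n = g * Q.coeff m := by
        rw [hH]
        simp [hm, Polynomial.coeff_X_mul, Polynomial.coeff_one]
      rw [hcn, hQm]
      exact mul_ne_zero hg (mul_ne_zero (mul_ne_zero hFn (pow_ne_zero _ ha0))
        (pow_ne_zero _ hg))
    have hHdeg : 0 < H.natDegree := lt_of_lt_of_le hF (Polynomial.le_natDegree_of_ne_zero hHn)
    obtain ⟨c, hc⟩ := hP2 H hHdeg
    have hQeval : Q.eval c = ∑ i ∈ Finset.range n, F.coeff (i+1) * a^i * g^i * c^i := by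
      rw [hQ, Polynomial.eval_finset_sum]
      simp
    have hHeval : H.eval c = 1 + g * (c * Q.eval c) := by
      simp [hH]
    have heval : F.eval (a*g*c) = a * H.eval c := by
      have hr : a * H.eval c = a + ∑ i ∈ Finset.range n, F.coeff (i+1) * (a*g*c)^(i+1) := by
        rw [hHeval, hQeval]
        simp only [mul_add, mul_one, Finset.mul_sum]
        congr 1
        apply Finset.sum_congr rfl
        intro i _
        rw [pow_succ, mul_pow, mul_pow]
        ring
      rw [hr, Polynomial.eval_eq_sum_range, Finset.sum_range_succ', pow_zero, mul_one, add_comm]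
    refine ⟨a*g*c, fun hb => ?_⟩
    rw [heval, map_mul] at hb
    have h2 : IsUnit (algebraMap A (Localization.Away g) (H.eval c)) :=
      isUnit_of_mul_isUnit_right hb
    exact hc (unit_aux g hg (H.eval c) (c * Q.eval c) hHeval h2)
  · exact ⟨0, by rwa [← Polynomial.coeff_zero_eq_eval_zero, ← ha_def]⟩
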